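/- Under multivariate regular variation, for every unit vector u the projection uᵀX₁ is in the univariate max-domain of attraction with tail index α: lim_{t→∞} (1 - F_u(tr))/(1 - F_u(t)) = r^{-α} for all r > 0, where F_u is the distribution function of uᵀX₁. -/

import Mathlib

open MeasureTheory Filter
open scoped RealInnerProductSpace Pointwise

/-- Under multivariate regular variation, every projection `uᵀX₁` on a unit vector
`u` is in the univariate max-domain of attraction with tail index `α`:
`(1 - F_u(tr))/(1 - F_u(t)) → r^{-α}` as `t → ∞`, for every `r > 0`. -/
theorem projection_max_domain_of_attraction {d : ℕ} {Ω : Type*} [MeasurableSpace Ω]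
    (μ : Measure Ω) [IsProbabilityMeasure μ]
    (X : Ω → EuclideanSpace ℝ (Fin d)) (hX : Measurable X)
    (α : ℝ) (hα : 0 < α) (ν : Measure (EuclideanSpace ℝ (Fin d)))
    (hom : ∀ a : ℝ, 0 < a → ∀ B : Set (EuclideanSpace ℝ (Fin d)), MeasurableSet B →
      (∃ ε > 0, ∀ x ∈ B, ε ≤ ‖x‖) → ν (a • B) = ENNReal.ofReal (a ^ (-α)) * ν B)
    (hconv : ∀ B : Set (EuclideanSpace ℝ (Fin d)), MeasurableSet B →
      (∃ ε > 0, ∀ x ∈ B, ε ≤ ‖x‖) → ν (frontier B) = 0 → ν B ≠ ⊤ →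
      Tendsto (fun t : ℝ =>
          (μ {ω | X ω ∈ t • B}).toReal / (μ {ω | t ≤ ‖X ω‖}).toReal)
        atTop (nhds (ν B).toReal))
    (hfin : ∀ u : EuclideanSpace ℝ (Fin d), ‖u‖ = 1 → ν {x | 1 ≤ ⟪u, x⟫} ≠ ⊤)
    (hpos : ∀ u : EuclideanSpace ℝ (Fin d), ‖u‖ = 1 → 0 < ν {x | 1 ≤ ⟪u, x⟫})
    (u : EuclideanSpace ℝ (Fin d)) (hu : ‖u‖ = 1) (r : ℝ) (hr : 0 < r) :
    Tendsto (fun t : ℝ =>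
        (μ {ω | t * r ≤ ⟪u, X ω⟫}).toReal / (μ {ω | t ≤ ⟪u, X ω⟫}).toReal)
      atTop (nhds (r ^ (-α))) := by
  classical
  have hcont : Continuous (fun x : EuclideanSpace ℝ (Fin d) => ⟪u, x⟫) :=
    continuous_const.inner continuous_id
  set H : ℝ → Set (EuclideanSpace ℝ (Fin d)) := fun s => {x | s ≤ ⟪u, x⟫} with hHdef
  have hmeas : ∀ s : ℝ, MeasurableSet (H s) := fun s =>
    (isClosed_le continuous_const hcont).measurableSet
  have hbdd : ∀ s : ℝ, 0 < s → ∃ ε > 0, ∀ x ∈ H s, ε ≤ ‖x‖ := by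
    intro s hs
    refine ⟨s, hs, fun x hx => ?_⟩
    have h1 : ⟪u, x⟫ ≤ ‖x‖ := by
      have := real_inner_le_norm u x
      rwa [hu, one_mul] at this
    exact le_trans hx h1
  have hsmul : ∀ a s : ℝ, 0 < a → a • H s = H (a * s) := by
    intro a s ha
    ext x
    rw [Set.mem_smul_set_iff_inv_smul_mem₀ (ne_of_gt ha)]
    simp only [hHdef, Set.mem_setOf_eq, real_inner_smul_right]
    exact le_inv_mul_iff₀ ha
  have hνH : ∀ s : ℝ, 0 < s → ν (H s) = ENNReal.ofReal (s ^ (-α)) * ν (H 1) := by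
    intro s hs
    have h1 : H s = s • H 1 := by rw [hsmul s 1 hs, mul_one]
    rw [h1, hom s hs (H 1) (hmeas 1) (hbdd 1 one_pos)]
  have hfinH : ν (H 1) ≠ ⊤ := hfin u hu
  have hνfin : ∀ s : ℝ, 0 < s → ν (H s) ≠ ⊤ := by
    intro s hs
    rw [hνH s hs]
    exact ENNReal.mul_ne_top ENNReal.ofReal_ne_top hfinH
  -- the hyperplane has ν-measure zero
  have hline : ∀ s : ℝ, 0 < s → ν {x | ⟪u, x⟫ = s} = 0 := by
    intro s hs
    have key : ∀ n : ℕ, ν {x | ⟪u, x⟫ = s} + ν (H (s + 1 / (n + 1))) ≤ ν (H s) := by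
      intro n
      have hpos' : (0 : ℝ) < 1 / (n + 1 : ℝ) := by positivity
      have hdisj : Disjoint {x : EuclideanSpace ℝ (Fin d) | ⟪u, x⟫ = s} (H (s + 1 / (n + 1))) := by
        rw [Set.disjoint_left]
        intro x hx hx'
        simp only [hHdef, Set.mem_setOf_eq] at hx hx'
        linarith
      rw [← measure_union hdisj (hmeas _)]
      apply measure_mono
      intro x hx
      rcases hx with hx | hx
      · simp only [Set.mem_setOf_eq] at hx
        show s ≤ ⟪u, x⟫
        exact le_of_eq hx.symm
      · simp only [hHdef, Set.mem_setOf_eq] at hx ⊢; linarith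
    have hlim : Tendsto (fun n : ℕ => ν {x | ⟪u, x⟫ = s} + ν (H (s + 1 / (n + 1))))
        atTop (nhds (ν {x | ⟪u, x⟫ = s} + ν (H s))) := by
      apply Tendsto.const_add
      have hs' : Tendsto (fun n : ℕ => s + 1 / (n + 1 : ℝ)) atTop (nhds s) := by
        have := tendsto_one_div_add_atTop_nhds_zero_nat (𝕜 := ℝ)
        have h2 := this.const_add s
        simpa using h2
      have hc : ContinuousAt (fun y : ℝ => ENNReal.ofReal (y ^ (-α))) s :=
        ENNReal.continuous_ofReal.continuousAt.comp
          (Real.continuousAt_rpow_const s (-α) (Or.inl (ne_of_gt hs)))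
      have h3 : Tendsto (fun n : ℕ => ENNReal.ofReal ((s + 1 / (n + 1 : ℝ)) ^ (-α)) * ν (H 1))
          atTop (nhds (ENNReal.ofReal (s ^ (-α)) * ν (H 1))) :=
        ENNReal.Tendsto.mul_const (hc.tendsto.comp hs') (Or.inr hfinH)
      rw [hνH s hs]
      refine h3.congr fun n => ?_
      exact (hνH _ (by positivity)).symm
    have hle : ν {x | ⟪u, x⟫ = s} + ν (H s) ≤ ν (H s) := le_of_tendsto' hlim key
    have : ν {x | ⟪u, x⟫ = s} + ν (H s) ≤ 0 + ν (H s) := by rwa [zero_add]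
    have := (ENNReal.add_le_add_iff_right (hνfin s hs)).mp this
    exact le_antisymm this zero_le
  have hfr : ∀ s : ℝ, 0 < s → ν (frontier (H s)) = 0 := by
    intro s hs
    refine measure_mono_null ?_ (hline s hs)
    have h1 : H s = (fun x : EuclideanSpace ℝ (Fin d) => ⟪u, x⟫) ⁻¹' Set.Ici s := rfl
    rw [h1]
    refine (hcont.frontier_preimage_subset _).trans ?_
    rw [frontier_Ici]
    intro x hx
    exact hx
  -- apply the convergence hypothesis
  have hf := hconv (H r) (hmeas r) (hbdd r hr) (hfr r hr) (hνfin r hr)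
  have hg := hconv (H 1) (hmeas 1) (hbdd 1 one_pos) (hfr 1 one_pos) hfinH
  set c : ℝ := (ν (H 1)).toReal with hcdef
  have hc : 0 < c := ENNReal.toReal_pos (hpos u hu).ne' hfinH
  have hνr : (ν (H r)).toReal = r ^ (-α) * c := by
    rw [hνH r hr, ENNReal.toReal_mul, ENNReal.toReal_ofReal (Real.rpow_nonneg hr.le _)]
  rw [hνr] at hf
  have hdiv : Tendsto (fun t : ℝ =>
      ((μ {ω | X ω ∈ t • H r}).toReal / (μ {ω | t ≤ ‖X ω‖}).toReal) /
        ((μ {ω | X ω ∈ t • H 1}).toReal / (μ {ω | t ≤ ‖X ω‖}).toReal))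
      atTop (nhds (r ^ (-α) * c / c)) := hf.div hg hc.ne'
  rw [mul_div_cancel_right₀ _ hc.ne'] at hdiv
  refine Tendsto.congr' ?_ hdiv
  have hev1 : ∀ᶠ t : ℝ in atTop, 0 < t := eventually_gt_atTop 0
  have hev2 : ∀ᶠ t : ℝ in atTop,
      0 < (μ {ω | X ω ∈ t • H 1}).toReal / (μ {ω | t ≤ ‖X ω‖}).toReal :=
    hg.eventually (eventually_gt_nhds hc)
  filter_upwards [hev1, hev2] with t ht hgt
  have hD : (μ {ω | t ≤ ‖X ω‖}).toReal ≠ 0 := by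
    intro h0
    rw [h0, div_zero] at hgt
    exact lt_irrefl _ hgt
  have hB : (μ {ω | X ω ∈ t • H 1}).toReal ≠ 0 := by
    intro h0
    rw [h0, zero_div] at hgt
    exact lt_irrefl _ hgt
  have e1 : {ω | X ω ∈ t • H r} = {ω | t * r ≤ ⟪u, X ω⟫} := by
    rw [hsmul t r ht]; rfl
  have e2 : {ω | X ω ∈ t • H 1} = {ω | t ≤ ⟪u, X ω⟫} := by
    rw [hsmul t 1 ht, mul_one]; rfl
  rw [div_div_div_cancel_right₀ hD, e1, e2]
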